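/- In the fusion ring of D⁰Hg_ν, the fusion coefficient N_{b, d_l, d_l} = 0 for every 1 ≤ l ≤ m; i.e., the simple-current b acts freely on the class-4 primaries: b·d_l = d_l is never a constituent. -/

import Mathlib

open Finset Real

lemma cos_sum_full (M k : ℕ) (hk : 0 < k) (hkM : k < M) :
    ∑ j ∈ Finset.range M, Real.cos (2 * Real.pi * k * j / M) = 0 := by
  have hM0 : 0 < M := hk.trans hkM
  have hMne : (M : ℝ) ≠ 0 := by positivity
  set z : ℂ := Complex.exp ((2 * Real.pi * k / M : ℝ) * Complex.I) with hz
  have hzpow : ∀ j : ℕ, z ^ j = Complex.exp ((2 * Real.pi * k * j / M : ℝ) * Complex.I) := by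
    intro j
    rw [hz, ← Complex.exp_nat_mul]
    congr 1
    push_cast
    ring
  have hzM : z ^ M = 1 := by
    rw [hzpow]
    have h1 : (2 * Real.pi * k * M / M : ℝ) = (k : ℝ) * (2 * Real.pi) := by
      field_simp
    rw [h1]
    rw [show (((k : ℝ) * (2 * Real.pi) : ℝ) : ℂ) * Complex.I
        = ((k : ℤ) : ℂ) * (2 * (Real.pi : ℂ) * Complex.I) by push_cast; ring]
    exact Complex.exp_int_mul_two_pi_mul_I k
  have hz1 : z ≠ 1 := by
    intro h
    rw [hz, Complex.exp_eq_one_iff] at h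
    obtain ⟨t, ht⟩ := h
    have ht' : ((2 * Real.pi * k / M : ℝ) : ℂ) = ((t * (2 * Real.pi) : ℝ) : ℂ) := by
      apply mul_right_cancel₀ Complex.I_ne_zero
      rw [ht]; push_cast; ring
    have ht2 : (2 * Real.pi * k / M : ℝ) = t * (2 * Real.pi) := by exact_mod_cast ht'
    have hkt : (k : ℝ) = t * M := by
      have h2 : (2 * Real.pi) * (k : ℝ) = (2 * Real.pi) * ((t : ℝ) * M) := by
        field_simp at ht2
        rw [ht2]; ring
      exact mul_left_cancel₀ (by positivity) h2
    have hMR : (0:ℝ) < M := by positivity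
    have hkR : (0:ℝ) < k := by exact_mod_cast hk
    have htpos : (0:ℤ) < t := by
      by_contra hc
      push_neg at hc
      have : (t:ℝ) ≤ 0 := by exact_mod_cast hc
      nlinarith
    have ht1 : (1:ℝ) ≤ (t:ℝ) := by exact_mod_cast htpos
    have hkMR : (k:ℝ) < M := by exact_mod_cast hkM
    nlinarith
  have hgeom : ∑ j ∈ Finset.range M, z ^ j = 0 := by
    rw [geom_sum_eq hz1, hzM]
    simp
  have : ∑ j ∈ Finset.range M, Real.cos (2 * Real.pi * k * j / M)
      = (∑ j ∈ Finset.range M, z ^ j).re := by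
    rw [Complex.re_sum]
    refine Finset.sum_congr rfl fun j _ => ?_
    rw [hzpow, Complex.exp_ofReal_mul_I_re]
  rw [this, hgeom]
  simp

lemma cos_sum_half (m k : ℕ) (hk : 0 < k) (hkM : k < 2 * m + 1) :
    ∑ j ∈ Finset.range m, Real.cos (2 * Real.pi * k * (j + 1) / (2 * m + 1)) = -(1/2) := by
  have h0 := cos_sum_full (2 * m + 1) k hk hkM
  rw [Finset.sum_range_succ'] at h0
  push_cast at h0
  rw [show 2 * m = m + m from by ring, Finset.sum_range_add] at h0
  have hsecond : ∑ j ∈ Finset.range m,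
        Real.cos (2 * Real.pi * k * (((m + j : ℕ) : ℝ) + 1) / (2 * m + 1))
      = ∑ j ∈ Finset.range m, Real.cos (2 * Real.pi * k * ((j : ℝ) + 1) / (2 * m + 1)) := by
    rw [← Finset.sum_range_reflect (fun j => Real.cos (2 * Real.pi * k * ((j : ℝ) + 1) / (2 * m + 1))) m]
    refine Finset.sum_congr rfl fun j hj => ?_
    have hj' : j < m := Finset.mem_range.mp hj
    have h1 : ((m - 1 - j : ℕ) : ℝ) + 1 = (m : ℝ) - j := by
      have he : m - 1 - j = m - (j + 1) := by omega
      rw [he, Nat.cast_sub (by omega)]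
      push_cast
      ring
    have h2 : 2 * Real.pi * k * (((m + j : ℕ) : ℝ) + 1) / (2 * m + 1)
        = ((k : ℤ) : ℝ) * (2 * Real.pi) - 2 * Real.pi * k * ((m : ℝ) - j) / (2 * m + 1) := by
      have hne : (2 * (m : ℝ) + 1) ≠ 0 := by positivity
      push_cast
      field_simp
      ring
    rw [h2, Real.cos_int_mul_two_pi_sub, h1]
  rw [hsecond] at h0
  simp only [mul_zero, zero_div, Real.cos_zero] at h0
  linarith

/-- Index set for the primaries of the Haagerup–Izumi modular data `D⁰Hg_ν`, `ν = 2n+1`: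
class 1 (vacuum `0` and `b`), class 2 (`a_i`, `1 ≤ i ≤ n`), class 3 (`c_{h,j}`),
class 4 (`d_l`, `1 ≤ l ≤ m`, `m = (ν²+3)/2 = 2n²+2n+2`). -/
abbrev HgIdx (n : ℕ) : Type :=
  Fin 2 ⊕ Fin n ⊕ (Fin n × Fin (2 * n + 1)) ⊕ Fin (2 * n ^ 2 + 2 * n + 2)

/-- The S-matrix of the untwisted Haagerup–Izumi modular data `D⁰Hg_ν`. -/
noncomputable def HgS (n : ℕ) : HgIdx n → HgIdx n → ℝ := fun x y =>
  let v : ℝ := 2 * n + 1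
  let sμ : ℝ := Real.sqrt (v ^ 2 + 4)
  let yy : ℝ := v / sμ
  match x, y with
  | .inl s, .inl t => (if s = t then 1 - yy else 1 + yy) / (2 * v)
  | .inl _, .inr (.inl _) => 1 / v
  | .inl _, .inr (.inr (.inl _)) => 1 / v
  | .inl s, .inr (.inr (.inr _)) => (if s = 0 then yy else -yy) / v
  | .inr (.inl _), .inl _ => 1 / v
  | .inr (.inr (.inl _)), .inl _ => 1 / v
  | .inr (.inr (.inr _)), .inl s => (if s = 0 then yy else -yy) / v
  | .inr (.inl _), .inr (.inl _) => 2 / v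
  | .inr (.inl i), .inr (.inr (.inl hj)) =>
      2 * Real.cos (2 * Real.pi * (i.1 + 1) * (hj.1.1 + 1) / v) / v
  | .inr (.inr (.inl hj)), .inr (.inl i) =>
      2 * Real.cos (2 * Real.pi * (i.1 + 1) * (hj.1.1 + 1) / v) / v
  | .inr (.inl _), .inr (.inr (.inr _)) => 0
  | .inr (.inr (.inr _)), .inr (.inl _) => 0
  | .inr (.inr (.inl hj)), .inr (.inr (.inl hj')) =>
      2 * Real.cos (2 * Real.pi *
        ((hj.1.1 + 1) * hj'.2.1 + (hj'.1.1 + 1) * hj.2.1) / v) / v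
  | .inr (.inr (.inl _)), .inr (.inr (.inr _)) => 0
  | .inr (.inr (.inr _)), .inr (.inr (.inl _)) => 0
  | .inr (.inr (.inr l)), .inr (.inr (.inr l')) =>
      -(2 / sμ) * Real.cos (2 * Real.pi * (l.1 + 1) * (l'.1 + 1) / (v ^ 2 + 4))

set_option maxHeartbeats 1000000 in
/-- In `D⁰Hg_ν` the Verlinde fusion coefficient `N_{b,d_l,d_l}` vanishes for every `l`. -/
theorem stmt8 (n : ℕ) (l : Fin (2 * n ^ 2 + 2 * n + 2)) :
    ∑ x : HgIdx n,
        HgS n (Sum.inl 1) x * HgS n (Sum.inr (Sum.inr (Sum.inr l))) x *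
          HgS n (Sum.inr (Sum.inr (Sum.inr l))) x / HgS n (Sum.inl 0) x = 0 := by
  simp only [Fintype.sum_sum_type]
  rw [Fin.sum_univ_two]
  simp only [HgS]
  simp only [show ((1:Fin 2) = 0) = False from by decide, show ((0:Fin 2) = 1) = False from by decide,
    if_false, if_true, mul_zero, zero_mul, zero_div, Finset.sum_const_zero, add_zero, zero_add]
  have hπ := Real.pi_pos
  set V : ℝ := 2*(n:ℝ)+1 with hVdef
  set S : ℝ := Real.sqrt (V^2+4) with hSdef
  have hV : 0 < V := by rw [hVdef]; positivity
  have hS2 : S^2 = V^2+4 := Real.sq_sqrt (by positivity)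
  have hSpos : 0 < S := by rw [hSdef]; positivity
  clear_value V S
  have hVS : V < S := by nlinarith
  have hVne : V ≠ 0 := ne_of_gt hV
  have hSne : S ≠ 0 := ne_of_gt hSpos
  have hY1 : V/S < 1 := (div_lt_one hSpos).mpr hVS
  have hY0 : 0 < V/S := div_pos hV hSpos
  have h1m : (1:ℝ) - V/S ≠ 0 := ne_of_gt (by linarith)
  have h1p : (1:ℝ) + V/S ≠ 0 := by positivity
  have hU : (V^2+4:ℝ) ≠ 0 := by positivity
  have hμ : V^2+4 = 2*((2*n^2+2*n+2 : ℕ):ℝ)+1 := by rw [hVdef]; push_cast; ring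
  have hsum : ∑ x : Fin (2 * n ^ 2 + 2 * n + 2),
      -(V / S) / V * (-(2 / S) * Real.cos (2 * π * (((l:ℕ):ℝ) + 1) * (((x:ℕ):ℝ) + 1) / (V ^ 2 + 4))) *
          (-(2 / S) * Real.cos (2 * π * (((l:ℕ):ℝ) + 1) * (((x:ℕ):ℝ) + 1) / (V ^ 2 + 4))) /
        (V / S / V) = -((V^2+2)/(V^2+4)) := by
    have hper : ∀ x : Fin (2 * n ^ 2 + 2 * n + 2),
        -(V / S) / V * (-(2 / S) * Real.cos (2 * π * (((l:ℕ):ℝ) + 1) * (((x:ℕ):ℝ) + 1) / (V ^ 2 + 4))) *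
            (-(2 / S) * Real.cos (2 * π * (((l:ℕ):ℝ) + 1) * (((x:ℕ):ℝ) + 1) / (V ^ 2 + 4))) /
          (V / S / V)
        = -(4/(V^2+4)) * (1/2 + Real.cos (2 * π * ((2*((l:ℕ)+1) : ℕ):ℝ) * (((x:ℕ):ℝ) + 1) /
            (2 * ((2*n^2+2*n+2 : ℕ):ℝ) + 1)) / 2) := by
      intro x
      have hc2 : Real.cos (2 * π * ((2*((l:ℕ)+1) : ℕ):ℝ) * (((x:ℕ):ℝ) + 1) /
            (2 * ((2*n^2+2*n+2 : ℕ):ℝ) + 1))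
          = 2 * Real.cos (2 * π * (((l:ℕ):ℝ) + 1) * (((x:ℕ):ℝ) + 1) / (V ^ 2 + 4)) ^ 2 - 1 := by
        rw [show (2 * π * ((2*((l:ℕ)+1) : ℕ):ℝ) * (((x:ℕ):ℝ) + 1) / (2 * ((2*n^2+2*n+2 : ℕ):ℝ) + 1))
            = 2 * (2 * π * (((l:ℕ):ℝ) + 1) * (((x:ℕ):ℝ) + 1) / (V ^ 2 + 4)) by
          rw [hμ]; push_cast; ring]
        exact Real.cos_two_mul _
      rw [hc2, ← hS2]
      field_simp
      ring
    simp only [hper]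
    rw [← Finset.mul_sum, Finset.sum_add_distrib, Finset.sum_const, ← Finset.sum_div]
    have hhalf : ∑ x : Fin (2 * n ^ 2 + 2 * n + 2),
        Real.cos (2 * π * ((2*((l:ℕ)+1) : ℕ):ℝ) * (((x:ℕ):ℝ) + 1) /
          (2 * ((2*n^2+2*n+2 : ℕ):ℝ) + 1)) = -(1/2) := by
      rw [Fin.sum_univ_eq_sum_range (fun j => Real.cos (2 * π * ((2*((l:ℕ)+1) : ℕ):ℝ) * (((j:ℕ):ℝ) + 1) /
          (2 * ((2*n^2+2*n+2 : ℕ):ℝ) + 1)))]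
      refine cos_sum_half _ _ (by omega) ?_
      have := l.isLt
      omega
    rw [hhalf]
    have hMR : ((2*n^2+2*n+2 : ℕ):ℝ) = (V^2+3)/2 := by rw [hVdef]; push_cast; ring
    simp only [Finset.card_univ, Fintype.card_fin, nsmul_eq_mul]
    rw [hMR]
    field_simp
    ring
  rw [hsum]
  have hstep : (1 + V / S) / (2 * V) * (V / S / V) * (V / S / V) / ((1 - V / S) / (2 * V)) +
      (1 - V / S) / (2 * V) * (-(V / S) / V) * (-(V / S) / V) / ((1 + V / S) / (2 * V))
      = (V/S)^2 * (2 + 2*(V/S)^2) / (V^2 * (1 - (V/S)^2)) := by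
    have h1msq : (1:ℝ) - (V/S)^2 ≠ 0 := ne_of_gt (by nlinarith)
    have hSV : S - V ≠ 0 := ne_of_gt (by linarith)
    have hSV' : S + V ≠ 0 := by positivity
    have hSV2 : S^2 - V^2 ≠ 0 := ne_of_gt (by nlinarith)
    field_simp [hSV, hSV', hSV2]
    ring
  have hY2 : (V/S)^2 = V^2/(V^2+4) := by rw [div_pow, hS2]
  rw [hstep, hY2]
  have hd : (1:ℝ) - V^2/(V^2+4) ≠ 0 := by rw [← hY2]; exact ne_of_gt (by nlinarith)
  field_simp
  ring
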